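/- There exists an absolute constant C > 0 with the following property. Let X ≥ 2 and M ≥ 2 be real numbers, let p be a prime with M < p ≤ 2M, let c and d be nonnegative integers with M^c ≤ X and M^d ≤ X, let u, v be positive integers with u + v = 6, and let ξ, ζ be integers. Then ∫_{[0,1)³} |𝔣_c(α;ξ)^{2u} 𝔣_d(α;ζ)^{2v}| dα ≤ C (J_{6,3}(X/M^c))^{u/6} (J_{6,3}(X/M^d))^{v/6}. -/

import Mathlib

open scoped BigOperators
open MeasureTheory
open Complex
open scoped ENNReal NNReal

noncomputable section

/-- `J s k X` counts the `2s`-tuples of integers `(x₁,…,x_s,y₁,…,y_s)` with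
`1 ≤ x_i, y_i ≤ X` satisfying `x₁^j + ⋯ + x_s^j = y₁^j + ⋯ + y_s^j` for `1 ≤ j ≤ k`. -/
def J (s k : ℕ) (X : ℝ) : ℕ :=
  Set.ncard {xy : (Fin s → ℤ) × (Fin s → ℤ) |
    (∀ i, 1 ≤ xy.1 i ∧ (xy.1 i : ℝ) ≤ X) ∧
    (∀ i, 1 ≤ xy.2 i ∧ (xy.2 i : ℝ) ≤ X) ∧
    (∀ j : ℕ, 1 ≤ j → j ≤ k → ∑ i, xy.1 i ^ j = ∑ i, xy.2 i ^ j)}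

/-- `e z = e^{2πiz}`. -/
def eThe (z : ℝ) : ℂ := Complex.exp (2 * Real.pi * Complex.I * z)

/-- The unit cube `[0,1)³`. -/
def cube : Set (Fin 3 → ℝ) := Set.univ.pi fun _ => Set.Ico (0 : ℝ) 1

/-- `𝔣_c(α;ξ) = Σ_{1 ≤ x ≤ X, x ≡ ξ (mod p^c)} e(α₁x + α₂x² + α₃x³)`. -/
def fgen (X : ℝ) (p c : ℕ) (ξ : ℤ) (α : Fin 3 → ℝ) : ℂ :=
  ∑ x ∈ Finset.Icc (1 : ℤ) ⌊X⌋,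
    if x ≡ ξ [ZMOD (p : ℤ) ^ c] then eThe (α 0 * x + α 1 * x ^ 2 + α 2 * x ^ 3) else 0


lemma eThe_add (a b : ℝ) : eThe (a + b) = eThe a * eThe b := by
  simp only [eThe, ← Complex.exp_add]
  congr 1
  push_cast
  ring

lemma norm_eThe (a : ℝ) : ‖eThe a‖ = 1 := by
  simp only [eThe, Complex.norm_exp]
  have : (2 * (Real.pi:ℂ) * Complex.I * a).re = 0 := by simp
  rw [this, Real.exp_zero]

lemma conj_eThe (a : ℝ) : (starRingEnd ℂ) (eThe a) = eThe (-a) := by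
  rw [eThe, ← Complex.exp_conj, eThe]
  congr 1
  simp only [map_mul, Complex.conj_I, Complex.conj_ofReal, map_ofNat]
  push_cast
  ring

lemma continuous_eThe : Continuous eThe := by
  unfold eThe; fun_prop

lemma measurableSet_cube : MeasurableSet cube :=
  MeasurableSet.univ_pi fun _ => measurableSet_Ico

lemma volume_cube : volume cube = 1 := by
  rw [cube, volume_pi_pi]
  simp

lemma int1 (n : ℤ) : (∫ t in Set.Ico (0:ℝ) 1, eThe (t * n)) = if n = 0 then 1 else 0 := by
  rw [MeasureTheory.Measure.restrict_congr_set MeasureTheory.Ico_ae_eq_Ioc,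
    ← intervalIntegral.integral_of_le zero_le_one]
  by_cases h : n = 0
  · simp [h, eThe]
  · simp only [h, if_false]
    have hc : (2 * (Real.pi:ℂ) * Complex.I * n) ≠ 0 := by
      simp [Real.pi_ne_zero, Complex.I_ne_zero, h]
    have key : ∀ t : ℝ, eThe (t * n) = Complex.exp ((2 * (Real.pi:ℂ) * Complex.I * n) * t) := by
      intro t; rw [eThe]; congr 1; push_cast; ring
    simp_rw [key]
    rw [integral_exp_mul_complex hc]
    have : Complex.exp (2 * (Real.pi:ℂ) * Complex.I * n * (1:ℝ)) = 1 := by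
      rw [show (2 * (Real.pi:ℂ) * Complex.I * n * (1:ℝ)) = (n : ℂ) * (2 * Real.pi * Complex.I) by push_cast; ring]
      exact Complex.exp_int_mul_two_pi_mul_I n
    rw [this]
    simp


lemma eThe_sum {ι : Type*} (s : Finset ι) (g : ι → ℝ) :
    eThe (∑ i ∈ s, g i) = ∏ i ∈ s, eThe (g i) := by
  classical
  induction s using Finset.induction_on with
  | empty => simp [eThe]
  | @insert a s h ih => rw [Finset.sum_insert h, Finset.prod_insert h, eThe_add, ih]

lemma integrableOn_cube {E : Type*} [NormedAddCommGroup E] {f : (Fin 3 → ℝ) → E}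
    (hf : Continuous f) (C : ℝ) (hC : ∀ α, ‖f α‖ ≤ C) : IntegrableOn f cube := by
  refine MeasureTheory.Integrable.mono' (g := fun _ => C) ?_ hf.aestronglyMeasurable
    (Filter.Eventually.of_forall hC)
  refine (MeasureTheory.integrableOn_const_iff).mpr (Or.inr ?_)
  rw [volume_cube]
  exact ENNReal.one_lt_top

lemma orth (m : Fin 3 → ℤ) :
    (∫ α in cube, eThe (∑ i, α i * (m i : ℝ))) = if (∀ i, m i = 0) then 1 else 0 := by
  classical
  have hprod : ∀ α : Fin 3 → ℝ, eThe (∑ i, α i * (m i : ℝ)) = ∏ i, eThe (α i * (m i : ℝ)) :=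
    fun α => eThe_sum Finset.univ _
  have key : ∀ α, cube.indicator (fun α : Fin 3 → ℝ => ∏ i, eThe (α i * (m i : ℝ))) α
      = ∏ i, (Set.Ico (0:ℝ) 1).indicator (fun t => eThe (t * (m i : ℝ))) (α i) := by
    intro α
    by_cases hα : α ∈ cube
    · rw [Set.indicator_of_mem hα]
      refine Finset.prod_congr rfl fun i _ => ?_
      rw [Set.indicator_of_mem]
      exact hα i (Set.mem_univ i)
    · rw [Set.indicator_of_notMem hα]
      rw [cube, Set.mem_univ_pi] at hα
      push_neg at hα
      obtain ⟨i, hi⟩ := hα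
      symm
      exact Finset.prod_eq_zero (Finset.mem_univ i) (Set.indicator_of_notMem hi _)
  calc (∫ α in cube, eThe (∑ i, α i * (m i : ℝ)))
      = ∫ α : Fin 3 → ℝ, cube.indicator (fun α => ∏ i, eThe (α i * (m i : ℝ))) α := by
        rw [MeasureTheory.integral_indicator measurableSet_cube]
        exact MeasureTheory.integral_congr_ae (Filter.Eventually.of_forall fun α => hprod α)
    _ = ∫ α : Fin 3 → ℝ, ∏ i, (Set.Ico (0:ℝ) 1).indicator (fun t => eThe (t * (m i : ℝ))) (α i) :=
        MeasureTheory.integral_congr_ae (Filter.Eventually.of_forall key)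
    _ = ∏ i : Fin 3, ∫ t : ℝ, (Set.Ico (0:ℝ) 1).indicator (fun t => eThe (t * (m i : ℝ))) t :=
        MeasureTheory.integral_fintype_prod_eq_prod _
    _ = ∏ i : Fin 3, ∫ t in Set.Ico (0:ℝ) 1, eThe (t * (m i : ℝ)) := by
        refine Finset.prod_congr rfl fun i _ => ?_
        rw [MeasureTheory.integral_indicator measurableSet_Ico]
    _ = ∏ i : Fin 3, if m i = 0 then 1 else 0 := Finset.prod_congr rfl fun i _ => int1 (m i)
    _ = if (∀ i, m i = 0) then 1 else 0 := by
        by_cases h : ∀ i, m i = 0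
        · simp [h]
        · push_neg at h
          obtain ⟨i, hi⟩ := h
          rw [if_neg (by push_neg; exact ⟨i, hi⟩),
            Finset.prod_eq_zero (Finset.mem_univ i) (if_neg hi : (if m i = 0 then (1:ℂ) else 0) = 0)]

def P6 (T : Finset ℤ) : Finset (Fin 6 → ℤ) := Fintype.piFinset fun _ => T

def solSet (T : Finset ℤ) : Finset ((Fin 6 → ℤ) × (Fin 6 → ℤ)) :=
  (P6 T ×ˢ P6 T).filter fun xy => ∀ j ∈ Finset.Icc 1 3, ∑ i, xy.1 i ^ j = ∑ i, xy.2 i ^ j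

def expSum (T : Finset ℤ) (α : Fin 3 → ℝ) : ℂ :=
  ∑ x ∈ T, eThe (α 0 * (x:ℝ) + α 1 * (x:ℝ) ^ 2 + α 2 * (x:ℝ) ^ 3)

lemma continuous_expSum (T : Finset ℤ) : Continuous (expSum T) := by
  refine continuous_finset_sum _ fun x _ => continuous_eThe.comp ?_
  fun_prop

lemma norm_expSum_le (T : Finset ℤ) (α : Fin 3 → ℝ) : ‖expSum T α‖ ≤ T.card := by
  refine le_trans (norm_sum_le _ _) ?_
  rw [Finset.sum_congr rfl fun x _ => norm_eThe _]
  simp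

lemma sum_phs (x : Fin 6 → ℤ) (α : Fin 3 → ℝ) :
    ∑ i, (α 0 * (x i : ℝ) + α 1 * (x i : ℝ) ^ 2 + α 2 * (x i : ℝ) ^ 3)
      = ∑ j : Fin 3, α j * ((∑ i, x i ^ ((j:ℕ)+1) : ℤ) : ℝ) := by
  rw [Fin.sum_univ_three]
  push_cast
  simp only [Finset.sum_add_distrib, Finset.mul_sum, pow_one]
  norm_num

lemma cond_iff (x y : Fin 6 → ℤ) :
    (∀ j : Fin 3, (∑ i, x i ^ ((j:ℕ)+1)) - ∑ i, y i ^ ((j:ℕ)+1) = 0) ↔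
    (∀ j ∈ Finset.Icc 1 3, (∑ i, x i ^ j) = ∑ i, y i ^ j) := by
  constructor
  · intro h j hj
    rw [Finset.mem_Icc] at hj
    obtain ⟨hj1, hj2⟩ := hj
    interval_cases j
    · simpa [sub_eq_zero] using h 0
    · simpa [sub_eq_zero] using h 1
    · simpa [sub_eq_zero] using h 2
  · intro h j
    fin_cases j
    · simpa [sub_eq_zero] using h 1 (by decide)
    · simpa [sub_eq_zero] using h 2 (by decide)
    · simpa [sub_eq_zero] using h 3 (by decide)

lemma expand (T : Finset ℤ) (α : Fin 3 → ℝ) :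
    (expSum T α) ^ 6 * ((starRingEnd ℂ) (expSum T α)) ^ 6
      = ∑ x ∈ P6 T, ∑ y ∈ P6 T,
          eThe (∑ j : Fin 3,
            α j * (((∑ i, x i ^ ((j:ℕ)+1)) - ∑ i, y i ^ ((j:ℕ)+1) : ℤ) : ℝ)) := by
  have hpow : (expSum T α) ^ 6
      = ∑ x ∈ P6 T, eThe (∑ i : Fin 6,
          (α 0 * (x i : ℝ) + α 1 * (x i : ℝ) ^ 2 + α 2 * (x i : ℝ) ^ 3)) := by
    calc (expSum T α) ^ 6 = ∏ _i : Fin 6, expSum T α := by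
          rw [Finset.prod_const, Finset.card_univ, Fintype.card_fin]
      _ = ∑ x ∈ P6 T, ∏ i : Fin 6,
            eThe (α 0 * (x i : ℝ) + α 1 * (x i : ℝ) ^ 2 + α 2 * (x i : ℝ) ^ 3) :=
          Finset.prod_univ_sum _ _
      _ = _ := Finset.sum_congr rfl fun x _ => (eThe_sum Finset.univ _).symm
  have hconj : ((starRingEnd ℂ) (expSum T α)) ^ 6
      = ∑ y ∈ P6 T, eThe (-∑ i : Fin 6,
          (α 0 * (y i : ℝ) + α 1 * (y i : ℝ) ^ 2 + α 2 * (y i : ℝ) ^ 3)) := by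
    have : (starRingEnd ℂ) (expSum T α)
        = ∑ x ∈ T, eThe (-(α 0 * (x:ℝ) + α 1 * (x:ℝ) ^ 2 + α 2 * (x:ℝ) ^ 3)) := by
      rw [expSum, map_sum]
      exact Finset.sum_congr rfl fun x _ => conj_eThe _
    calc ((starRingEnd ℂ) (expSum T α)) ^ 6 = ∏ _i : Fin 6, (starRingEnd ℂ) (expSum T α) := by
          rw [Finset.prod_const, Finset.card_univ, Fintype.card_fin]
      _ = ∑ y ∈ P6 T, ∏ i : Fin 6,
            eThe (-(α 0 * (y i : ℝ) + α 1 * (y i : ℝ) ^ 2 + α 2 * (y i : ℝ) ^ 3)) := by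
          simp_rw [this]
          exact Finset.prod_univ_sum _ _
      _ = _ := by
          refine Finset.sum_congr rfl fun y _ => ?_
          rw [← eThe_sum, Finset.sum_neg_distrib]
  rw [hpow, hconj, Finset.sum_mul_sum]
  refine Finset.sum_congr rfl fun x _ => Finset.sum_congr rfl fun y _ => ?_
  rw [← eThe_add]
  congr 1
  rw [sum_phs, sum_phs, Fin.sum_univ_three, Fin.sum_univ_three, Fin.sum_univ_three]
  push_cast
  ring

lemma moment (T : Finset ℤ) :
    (∫ α in cube, ‖expSum T α‖ ^ 12) = ((solSet T).card : ℝ) := by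
  classical
  have hInt : ∀ x y : Fin 6 → ℤ, IntegrableOn (fun α : Fin 3 → ℝ =>
      eThe (∑ j : Fin 3,
        α j * (((∑ i, x i ^ ((j:ℕ)+1)) - ∑ i, y i ^ ((j:ℕ)+1) : ℤ) : ℝ))) cube := by
    intro x y
    refine integrableOn_cube (continuous_eThe.comp ?_) 1 fun α => le_of_eq (norm_eThe _)
    fun_prop
  have h1 : ∀ α, ((‖expSum T α‖ ^ 12 : ℝ) : ℂ)
      = (expSum T α) ^ 6 * ((starRingEnd ℂ) (expSum T α)) ^ 6 := by
    intro α
    rw [← mul_pow, Complex.mul_conj, Complex.normSq_eq_norm_sq]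
    norm_cast
    rw [← pow_mul]
  have key : ((∫ α in cube, ‖expSum T α‖ ^ 12 : ℝ) : ℂ) = ((solSet T).card : ℂ) := by
    calc ((∫ α in cube, ‖expSum T α‖ ^ 12 : ℝ) : ℂ)
        = ∫ α in cube, ((‖expSum T α‖ ^ 12 : ℝ) : ℂ) := integral_ofReal.symm
      _ = ∫ α in cube, ∑ x ∈ P6 T, ∑ y ∈ P6 T,
            eThe (∑ j : Fin 3,
              α j * (((∑ i, x i ^ ((j:ℕ)+1)) - ∑ i, y i ^ ((j:ℕ)+1) : ℤ) : ℝ)) := by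
          refine MeasureTheory.integral_congr_ae (Filter.Eventually.of_forall fun α => ?_)
          simp only [h1, expand]
      _ = ∑ x ∈ P6 T, ∫ α in cube, ∑ y ∈ P6 T,
            eThe (∑ j : Fin 3,
              α j * (((∑ i, x i ^ ((j:ℕ)+1)) - ∑ i, y i ^ ((j:ℕ)+1) : ℤ) : ℝ)) :=
          MeasureTheory.integral_finset_sum _ fun x _ =>
            MeasureTheory.integrable_finset_sum _ fun y _ => hInt x y
      _ = ∑ x ∈ P6 T, ∑ y ∈ P6 T, ∫ α in cube,
            eThe (∑ j : Fin 3,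
              α j * (((∑ i, x i ^ ((j:ℕ)+1)) - ∑ i, y i ^ ((j:ℕ)+1) : ℤ) : ℝ)) :=
          Finset.sum_congr rfl fun x _ =>
            MeasureTheory.integral_finset_sum _ fun y _ => hInt x y
      _ = ∑ x ∈ P6 T, ∑ y ∈ P6 T,
            if (∀ j ∈ Finset.Icc 1 3, (∑ i, x i ^ j) = ∑ i, y i ^ j) then (1:ℂ) else 0 := by
          refine Finset.sum_congr rfl fun x _ => Finset.sum_congr rfl fun y _ => ?_
          rw [orth (fun j => (∑ i, x i ^ ((j:ℕ)+1)) - ∑ i, y i ^ ((j:ℕ)+1))]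
          exact if_congr (cond_iff x y) rfl rfl
      _ = ((solSet T).card : ℂ) := by
          rw [← Finset.sum_product', Finset.sum_boole, solSet]
  exact_mod_cast key
lemma mem_solSet {T : Finset ℤ} {xy : (Fin 6 → ℤ) × (Fin 6 → ℤ)} :
    xy ∈ solSet T ↔ (∀ i, xy.1 i ∈ T) ∧ (∀ i, xy.2 i ∈ T) ∧
      ∀ j ∈ Finset.Icc 1 3, (∑ i, xy.1 i ^ j) = ∑ i, xy.2 i ^ j := by
  simp [solSet, P6, Fintype.mem_piFinset, Finset.mem_product, and_assoc]

lemma solSet_mono {T U : Finset ℤ} (h : T ⊆ U) : solSet T ⊆ solSet U := by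
  intro xy hxy
  rw [mem_solSet] at hxy ⊢
  exact ⟨fun i => h (hxy.1 i), fun i => h (hxy.2.1 i), hxy.2.2⟩

lemma exp1 (a q : ℤ) (z : Fin 6 → ℤ) :
    ∑ i, (a + q * z i) = 6 * a + q * ∑ i, z i := by
  rw [Finset.sum_add_distrib, ← Finset.mul_sum]
  simp [Finset.sum_const, Finset.card_univ]

lemma exp2 (a q : ℤ) (z : Fin 6 → ℤ) :
    ∑ i, (a + q * z i) ^ 2
      = 6 * a ^ 2 + 2 * a * q * (∑ i, z i) + q ^ 2 * ∑ i, z i ^ 2 := by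
  have h : ∀ i : Fin 6, (a + q * z i) ^ 2
      = a ^ 2 + 2 * a * q * z i + q ^ 2 * z i ^ 2 := fun i => by ring
  rw [Finset.sum_congr rfl fun i _ => h i, Finset.sum_add_distrib, Finset.sum_add_distrib,
    ← Finset.mul_sum, ← Finset.mul_sum]
  simp [Finset.sum_const, Finset.card_univ]

lemma exp3 (a q : ℤ) (z : Fin 6 → ℤ) :
    ∑ i, (a + q * z i) ^ 3
      = 6 * a ^ 3 + 3 * a ^ 2 * q * (∑ i, z i) + 3 * a * q ^ 2 * (∑ i, z i ^ 2)
        + q ^ 3 * ∑ i, z i ^ 3 := by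
  have h : ∀ i : Fin 6, (a + q * z i) ^ 3
      = a ^ 3 + 3 * a ^ 2 * q * z i + 3 * a * q ^ 2 * z i ^ 2 + q ^ 3 * z i ^ 3 :=
    fun i => by ring
  rw [Finset.sum_congr rfl fun i _ => h i, Finset.sum_add_distrib, Finset.sum_add_distrib,
    Finset.sum_add_distrib, ← Finset.mul_sum, ← Finset.mul_sum, ← Finset.mul_sum]
  simp [Finset.sum_const, Finset.card_univ]

lemma sys_equiv (a q : ℤ) (hq : q ≠ 0) (x y : Fin 6 → ℤ) :
    (∀ j ∈ Finset.Icc 1 3, (∑ i, (a + q * x i) ^ j) = ∑ i, (a + q * y i) ^ j) ↔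
    (∀ j ∈ Finset.Icc 1 3, (∑ i, x i ^ j) = ∑ i, y i ^ j) := by
  constructor
  · intro h
    have h1 := h 1 (by decide)
    have h2 := h 2 (by decide)
    have h3 := h 3 (by decide)
    simp only [pow_one] at h1
    rw [exp1, exp1] at h1
    rw [exp2, exp2] at h2
    rw [exp3, exp3] at h3
    have e1 : (∑ i, x i) = ∑ i, y i := mul_left_cancel₀ hq (by linarith)
    rw [e1] at h2 h3
    have e2 : (∑ i, x i ^ 2) = ∑ i, y i ^ 2 :=
      mul_left_cancel₀ (pow_ne_zero 2 hq) (by linarith)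
    rw [e2] at h3
    have e3 : (∑ i, x i ^ 3) = ∑ i, y i ^ 3 :=
      mul_left_cancel₀ (pow_ne_zero 3 hq) (by linarith)
    intro j hj
    rw [Finset.mem_Icc] at hj
    obtain ⟨hj1, hj2⟩ := hj
    interval_cases j
    · simpa [pow_one] using e1
    · exact e2
    · exact e3
  · intro h
    have e1 := h 1 (by decide)
    have e2 := h 2 (by decide)
    have e3 := h 3 (by decide)
    simp only [pow_one] at e1
    intro j hj
    rw [Finset.mem_Icc] at hj
    obtain ⟨hj1, hj2⟩ := hj
    interval_cases j
    · simp only [pow_one]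
      rw [exp1, exp1, e1]
    · rw [exp2, exp2, e1, e2]
    · rw [exp3, exp3, e1, e2, e3]

lemma solSet_affine (a q : ℤ) (hq : q ≠ 0) (T : Finset ℤ) :
    (solSet T).card = (solSet (T.image fun t => a + q * t)).card := by
  refine Finset.card_bij
    (fun xy _ => ((fun i => a + q * xy.1 i), (fun i => a + q * xy.2 i))) ?_ ?_ ?_
  · intro xy hxy
    rw [mem_solSet] at hxy ⊢
    exact ⟨fun i => Finset.mem_image_of_mem _ (hxy.1 i),
      fun i => Finset.mem_image_of_mem _ (hxy.2.1 i),
      (sys_equiv a q hq _ _).mpr hxy.2.2⟩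
  · intro xy1 h1 xy2 h2 heq
    have key : ∀ z w : Fin 6 → ℤ,
        ((fun i => a + q * z i) : Fin 6 → ℤ) = (fun i => a + q * w i) → z = w := by
      intro z w hzw
      funext i
      have h2 : a + q * z i = a + q * w i := congrFun hzw i
      have : q * z i = q * w i := by linarith
      exact mul_left_cancel₀ hq this
    rw [Prod.mk.injEq] at heq
    exact Prod.ext (key _ _ heq.1) (key _ _ heq.2)
  · intro xy hxy
    rw [mem_solSet] at hxy
    choose s hs hsx using fun i => Finset.mem_image.mp (hxy.1 i)
    choose t ht hty using fun i => Finset.mem_image.mp (hxy.2.1 i)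
    refine ⟨(s, t), ?_, ?_⟩
    · rw [mem_solSet]
      refine ⟨hs, ht, (sys_equiv a q hq s t).mp ?_⟩
      have hc := hxy.2.2
      simp only [hsx, hty] at hc ⊢
      exact hc
    · exact Prod.ext (funext hsx) (funext hty)

lemma four_pow (a b c d : ℝ) (ha : 0 ≤ a) (hb : 0 ≤ b) (hc : 0 ≤ c) (hd : 0 ≤ d) :
    (a + b + c + d) ^ 12 ≤ 4 ^ 11 * (a ^ 12 + b ^ 12 + c ^ 12 + d ^ 12) := by
  have h := pow_sum_div_card_le_sum_pow (s := (Finset.univ : Finset (Fin 4)))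
    (f := ![a, b, c, d]) (fun i _ => by fin_cases i <;> assumption) 11
  simp only [Fin.sum_univ_four, Finset.card_univ, Fintype.card_fin] at h
  norm_num [Matrix.cons_val_zero, Matrix.cons_val_one] at h
  simp only [show ![a, b, c, d] 2 = c from rfl, show ![a, b, c, d] 3 = d from rfl] at h
  rw [div_le_iff₀ (by positivity)] at h
  linarith

lemma intOn_norm_pow (T : Finset ℤ) :
    MeasureTheory.IntegrableOn (fun α => ‖expSum T α‖ ^ 12) cube := by
  refine integrableOn_cube (((continuous_expSum T).norm).pow 12) ((T.card : ℝ) ^ 12) fun α => ?_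
  rw [Real.norm_of_nonneg (by positivity)]
  exact pow_le_pow_left₀ (norm_nonneg _) (norm_expSum_le T α) 12

lemma block_eq (a m : ℤ) :
    (solSet (Finset.Ioc a (a + m))).card = (solSet (Finset.Icc 1 m)).card := by
  have himg : (Finset.Icc (1:ℤ) m).image (fun t => a + 1 * t) = Finset.Ioc a (a + m) := by
    ext z
    simp only [Finset.mem_image, Finset.mem_Icc, Finset.mem_Ioc, one_mul]
    constructor
    · rintro ⟨t, ⟨h1, h2⟩, rfl⟩; omega
    · rintro ⟨h1, h2⟩; exact ⟨z - a, ⟨by omega, by omega⟩, by ring⟩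
  rw [← himg, ← solSet_affine a 1 one_ne_zero]

lemma Icc_translate (a b : ℤ) :
    (Finset.Icc (1:ℤ) (b - a + 1)).image (fun t => (a - 1) + 1 * t) = Finset.Icc a b := by
  ext z
  simp only [Finset.mem_image, Finset.mem_Icc, one_mul]
  constructor
  · rintro ⟨t, ⟨h1, h2⟩, rfl⟩; omega
  · rintro ⟨h1, h2⟩; exact ⟨z - a + 1, ⟨by omega, by omega⟩, by ring⟩

lemma split_bound (m n : ℤ) (hm : 1 ≤ m) (hn : n ≤ 4 * m) :
    ((solSet (Finset.Icc 1 n)).card : ℝ) ≤ 4 ^ 12 * ((solSet (Finset.Icc 1 m)).card : ℝ) := by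
  have mono : (solSet (Finset.Icc 1 n)).card ≤ (solSet (Finset.Icc (1:ℤ) (4 * m))).card :=
    Finset.card_le_card (solSet_mono (Finset.Icc_subset_Icc le_rfl hn))
  have mono' : ((solSet (Finset.Icc (1:ℤ) n)).card : ℝ)
      ≤ ((solSet (Finset.Icc (1:ℤ) (4 * m))).card : ℝ) := by exact_mod_cast mono
  refine le_trans mono' ?_
  -- decompose [1, 4m] into four blocks
  have d1 : Disjoint (Finset.Ioc (0:ℤ) m) (Finset.Ioc m (2*m)) :=
    Finset.disjoint_left.mpr fun x hx hx' => by
      simp only [Finset.mem_Ioc] at hx hx'; omega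
  have d2 : Disjoint (Finset.Ioc (0:ℤ) m ∪ Finset.Ioc m (2*m)) (Finset.Ioc (2*m) (3*m)) :=
    Finset.disjoint_left.mpr fun x hx hx' => by
      simp only [Finset.mem_union, Finset.mem_Ioc] at hx hx'; omega
  have d3 : Disjoint ((Finset.Ioc (0:ℤ) m ∪ Finset.Ioc m (2*m)) ∪ Finset.Ioc (2*m) (3*m))
      (Finset.Ioc (3*m) (4*m)) :=
    Finset.disjoint_left.mpr fun x hx hx' => by
      simp only [Finset.mem_union, Finset.mem_Ioc] at hx hx'; omega
  have hU : Finset.Icc (1:ℤ) (4*m)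
      = ((Finset.Ioc 0 m ∪ Finset.Ioc m (2*m)) ∪ Finset.Ioc (2*m) (3*m)) ∪ Finset.Ioc (3*m) (4*m) := by
    ext z
    simp only [Finset.mem_Icc, Finset.mem_union, Finset.mem_Ioc]
    omega
  have hdecomp : ∀ α, expSum (Finset.Icc (1:ℤ) (4*m)) α
      = expSum (Finset.Ioc 0 m) α + expSum (Finset.Ioc m (2*m)) α
        + expSum (Finset.Ioc (2*m) (3*m)) α + expSum (Finset.Ioc (3*m) (4*m)) α := by
    intro α
    rw [expSum, hU, Finset.sum_union d3, Finset.sum_union d2, Finset.sum_union d1]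
    rfl
  have hpt : ∀ α, ‖expSum (Finset.Icc (1:ℤ) (4*m)) α‖ ^ 12
      ≤ 4 ^ 11 * (‖expSum (Finset.Ioc (0:ℤ) m) α‖ ^ 12 + ‖expSum (Finset.Ioc m (2*m)) α‖ ^ 12
        + ‖expSum (Finset.Ioc (2*m) (3*m)) α‖ ^ 12 + ‖expSum (Finset.Ioc (3*m) (4*m)) α‖ ^ 12) := by
    intro α
    rw [hdecomp α]
    set A := expSum (Finset.Ioc (0:ℤ) m) α
    set B := expSum (Finset.Ioc m (2*m)) α
    set C := expSum (Finset.Ioc (2*m) (3*m)) α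
    set D := expSum (Finset.Ioc (3*m) (4*m)) α
    have hnorm : ‖A + B + C + D‖ ≤ ‖A‖ + ‖B‖ + ‖C‖ + ‖D‖ := by
      have h1 := norm_add_le (A + B + C) D
      have h2 := norm_add_le (A + B) C
      have h3 := norm_add_le A B
      linarith
    exact le_trans (pow_le_pow_left₀ (norm_nonneg _) hnorm 12)
      (four_pow _ _ _ _ (norm_nonneg _) (norm_nonneg _) (norm_nonneg _) (norm_nonneg _))
  have hint : ∀ T : Finset ℤ, MeasureTheory.IntegrableOn (fun α => ‖expSum T α‖ ^ 12) cube :=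
    intOn_norm_pow
  calc ((solSet (Finset.Icc (1:ℤ) (4*m))).card : ℝ)
      = ∫ α in cube, ‖expSum (Finset.Icc (1:ℤ) (4*m)) α‖ ^ 12 := (moment _).symm
    _ ≤ ∫ α in cube, 4 ^ 11 * (‖expSum (Finset.Ioc (0:ℤ) m) α‖ ^ 12
          + ‖expSum (Finset.Ioc m (2*m)) α‖ ^ 12
          + ‖expSum (Finset.Ioc (2*m) (3*m)) α‖ ^ 12
          + ‖expSum (Finset.Ioc (3*m) (4*m)) α‖ ^ 12) := by
        refine MeasureTheory.integral_mono (hint _) ?_ hpt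
        exact ((((hint _).add (hint _)).add (hint _)).add (hint _)).const_mul _
    _ = 4 ^ 11 * ((∫ α in cube, ‖expSum (Finset.Ioc (0:ℤ) m) α‖ ^ 12)
          + (∫ α in cube, ‖expSum (Finset.Ioc m (2*m)) α‖ ^ 12)
          + (∫ α in cube, ‖expSum (Finset.Ioc (2*m) (3*m)) α‖ ^ 12)
          + (∫ α in cube, ‖expSum (Finset.Ioc (3*m) (4*m)) α‖ ^ 12)) := by
        have hAB : MeasureTheory.IntegrableOn (fun α =>
            ‖expSum (Finset.Ioc (0:ℤ) m) α‖ ^ 12 + ‖expSum (Finset.Ioc m (2*m)) α‖ ^ 12)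
            cube := (hint _).add (hint _)
        have hABC : MeasureTheory.IntegrableOn (fun α =>
            ‖expSum (Finset.Ioc (0:ℤ) m) α‖ ^ 12 + ‖expSum (Finset.Ioc m (2*m)) α‖ ^ 12
              + ‖expSum (Finset.Ioc (2*m) (3*m)) α‖ ^ 12) cube := hAB.add (hint _)
        rw [MeasureTheory.integral_const_mul,
          MeasureTheory.integral_add hABC (hint _),
          MeasureTheory.integral_add hAB (hint _),
          MeasureTheory.integral_add (hint _) (hint _)]
    _ = 4 ^ 11 * (((solSet (Finset.Icc (1:ℤ) m)).card : ℝ)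
          + (solSet (Finset.Icc (1:ℤ) m)).card + (solSet (Finset.Icc (1:ℤ) m)).card
          + (solSet (Finset.Icc (1:ℤ) m)).card) := by
        have e0 : (solSet (Finset.Ioc (0:ℤ) m)).card = (solSet (Finset.Icc (1:ℤ) m)).card := by
          have h := block_eq 0 m; rwa [zero_add] at h
        have e1 : (solSet (Finset.Ioc m (2*m))).card = (solSet (Finset.Icc (1:ℤ) m)).card := by
          have h := block_eq m m; rwa [show m + m = 2*m by ring] at h
        have e2 : (solSet (Finset.Ioc (2*m) (3*m))).card = (solSet (Finset.Icc (1:ℤ) m)).card := by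
          have h := block_eq (2*m) m; rwa [show 2*m + m = 3*m by ring] at h
        have e3 : (solSet (Finset.Ioc (3*m) (4*m))).card = (solSet (Finset.Icc (1:ℤ) m)).card := by
          have h := block_eq (3*m) m; rwa [show 3*m + m = 4*m by ring] at h
        rw [moment, moment, moment, moment, e0, e1, e2, e3]
    _ = 4 ^ 12 * ((solSet (Finset.Icc 1 m)).card : ℝ) := by ring

lemma filter_eq (N q ξ : ℤ) (hq : 0 < q) :
    (Finset.Icc 1 N).filter (fun x => x ≡ ξ [ZMOD q])
      = (Finset.Icc (-((ξ % q - 1)/q)) ((N - ξ % q)/q)).image (fun t => ξ % q + q * t) := by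
  ext x
  simp only [Finset.mem_filter, Finset.mem_Icc, Finset.mem_image]
  constructor
  · rintro ⟨⟨h1, h2⟩, hmod⟩
    have hx : x % q = ξ % q := hmod
    have hxdiv : q * (x / q) + ξ % q = x := by rw [← hx]; exact Int.mul_ediv_add_emod x q
    refine ⟨x / q, ⟨?_, ?_⟩, by linarith⟩
    · rw [neg_le, Int.le_ediv_iff_mul_le hq]
      have : -(x / q) * q = -(q * (x / q)) := by ring
      linarith
    · rw [Int.le_ediv_iff_mul_le hq]
      have : x / q * q = q * (x / q) := by ring
      linarith
  · rintro ⟨t, ⟨ht1, ht2⟩, rfl⟩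
    have h1 : (-t) * q ≤ ξ % q - 1 := (Int.le_ediv_iff_mul_le hq).mp (by linarith)
    have h2 : t * q ≤ N - ξ % q := (Int.le_ediv_iff_mul_le hq).mp ht2
    have hc : q * t = t * q := mul_comm _ _
    refine ⟨⟨by linarith [neg_mul t q], by linarith⟩, ?_⟩
    show (ξ % q + q * t) % q = ξ % q
    rw [Int.add_mul_emod_self_left, Int.emod_emod_of_dvd _ dvd_rfl]

lemma prog_bound (N q ξ : ℤ) (hq : 0 < q) (Y : ℝ) (hY : 1 ≤ Y)
    (hb : (N : ℝ) ≤ q * Y) :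
    (N - ξ % q)/q - (-((ξ % q - 1)/q)) + 1 ≤ 4 * ⌊Y⌋ := by
  set r := ξ % q with hr
  set t2 := (N - r)/q with ht2
  set t1 := (r - 1)/q with ht1
  have h2 : t2 * q ≤ N - r := Int.ediv_mul_le _ hq.ne'
  have h1 : t1 * q ≤ r - 1 := Int.ediv_mul_le _ hq.ne'
  have hqR : (0:ℝ) < (q:ℝ) := by exact_mod_cast hq
  have hfl : (1:ℤ) ≤ ⌊Y⌋ := by rw [Int.le_floor]; exact_mod_cast hY
  have hflY : Y < (⌊Y⌋ : ℝ) + 1 := Int.lt_floor_add_one Y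
  have hs : t2 + t1 ≤ ⌊Y⌋ := by
    have h3 : (t2 + t1) * q ≤ N - 1 := by
      have e : (t2 + t1) * q = t2 * q + t1 * q := by ring
      linarith
    have h4 : ((t2 + t1 : ℤ) : ℝ) * q ≤ (N : ℝ) - 1 := by exact_mod_cast h3
    have h5 : ((t2 + t1 : ℤ) : ℝ) * q < Y * q := by
      have e : Y * q = q * Y := mul_comm _ _
      linarith
    have h6 : ((t2 + t1 : ℤ) : ℝ) < Y := lt_of_mul_lt_mul_right h5 hqR.le
    have h7 : ((t2 + t1 : ℤ) : ℝ) < ((⌊Y⌋ : ℤ) : ℝ) + 1 := h6.trans hflY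
    have h8 : t2 + t1 < ⌊Y⌋ + 1 := by exact_mod_cast h7
    omega
  omega

lemma holder_cube (f g : (Fin 3 → ℝ) → ℂ) (hf : Continuous f) (hg : Continuous g)
    (Cf Cg : ℝ) (hCf : ∀ α, ‖f α‖ ≤ Cf) (hCg : ∀ α, ‖g α‖ ≤ Cg)
    (u v : ℕ) (hu : 0 < u) (hv : 0 < v) (huv : u + v = 6) :
    (∫ α in cube, ‖f α‖ ^ (2 * u) * ‖g α‖ ^ (2 * v))
      ≤ (∫ α in cube, ‖f α‖ ^ 12) ^ ((u : ℝ) / 6)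
        * (∫ α in cube, ‖g α‖ ^ 12) ^ ((v : ℝ) / 6) := by
  have huR : (0:ℝ) < (u:ℝ) := by exact_mod_cast hu
  have hvR : (0:ℝ) < (v:ℝ) := by exact_mod_cast hv
  have huvR : (u:ℝ) + (v:ℝ) = 6 := by exact_mod_cast huv
  have hCf0 : 0 ≤ Cf := le_trans (norm_nonneg _) (hCf default)
  have hCg0 : 0 ≤ Cg := le_trans (norm_nonneg _) (hCg default)
  have hpq : Real.HolderConjugate (6 / (u:ℝ)) (6 / (v:ℝ)) := by
    rw [Real.holderConjugate_iff]
    constructor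
    · rw [lt_div_iff₀ huR]; linarith
    · rw [inv_div, inv_div]; field_simp; linarith
  have mf : Measurable fun α => (‖f α‖₊ : ℝ≥0∞) := hf.measurable.nnnorm.coe_nnreal_ennreal
  have mg : Measurable fun α => (‖g α‖₊ : ℝ≥0∞) := hg.measurable.nnnorm.coe_nnreal_ennreal
  set F : (Fin 3 → ℝ) → ℝ≥0∞ := fun α => (‖f α‖₊ : ℝ≥0∞) ^ (2 * u) with hF
  set G : (Fin 3 → ℝ) → ℝ≥0∞ := fun α => (‖g α‖₊ : ℝ≥0∞) ^ (2 * v) with hG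
  have key := ENNReal.lintegral_mul_le_Lp_mul_Lq (volume.restrict cube) hpq
    ((mf.pow_const (2*u)).aemeasurable) ((mg.pow_const (2*v)).aemeasurable)
  -- identify powers
  have hFpow : ∀ α, F α ^ ((6:ℝ) / u) = (‖f α‖₊ : ℝ≥0∞) ^ (12 : ℕ) := by
    intro α
    show ((‖f α‖₊ : ℝ≥0∞) ^ (2 * u)) ^ ((6:ℝ) / u) = _
    rw [← ENNReal.rpow_natCast (‖f α‖₊ : ℝ≥0∞) (2*u), ← ENNReal.rpow_mul]
    have : ((2 * u : ℕ) : ℝ) * ((6:ℝ) / u) = ((12 : ℕ) : ℝ) := by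
      push_cast; field_simp; ring
    rw [this, ENNReal.rpow_natCast]
  have hGpow : ∀ α, G α ^ ((6:ℝ) / v) = (‖g α‖₊ : ℝ≥0∞) ^ (12 : ℕ) := by
    intro α
    show ((‖g α‖₊ : ℝ≥0∞) ^ (2 * v)) ^ ((6:ℝ) / v) = _
    rw [← ENNReal.rpow_natCast (‖g α‖₊ : ℝ≥0∞) (2*v), ← ENNReal.rpow_mul]
    have : ((2 * v : ℕ) : ℝ) * ((6:ℝ) / v) = ((12 : ℕ) : ℝ) := by
      push_cast; field_simp; ring
    rw [this, ENNReal.rpow_natCast]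
  -- integrabilities
  have hIf : MeasureTheory.IntegrableOn (fun α => ‖f α‖ ^ 12) cube := by
    refine integrableOn_cube (hf.norm.pow 12) (Cf ^ 12) fun α => ?_
    rw [Real.norm_of_nonneg (by positivity)]
    exact pow_le_pow_left₀ (norm_nonneg _) (hCf α) 12
  have hIg : MeasureTheory.IntegrableOn (fun α => ‖g α‖ ^ 12) cube := by
    refine integrableOn_cube (hg.norm.pow 12) (Cg ^ 12) fun α => ?_
    rw [Real.norm_of_nonneg (by positivity)]
    exact pow_le_pow_left₀ (norm_nonneg _) (hCg α) 12
  have hA : (∫⁻ α in cube, F α ^ ((6:ℝ) / u))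
      = ENNReal.ofReal (∫ α in cube, ‖f α‖ ^ 12) := by
    rw [MeasureTheory.ofReal_integral_eq_lintegral_ofReal hIf
      (Filter.Eventually.of_forall fun α => by positivity)]
    refine MeasureTheory.lintegral_congr fun α => ?_
    rw [hFpow α, ← enorm_eq_nnnorm, ← ofReal_norm, ← ENNReal.ofReal_pow (norm_nonneg _)]
  have hB : (∫⁻ α in cube, G α ^ ((6:ℝ) / v))
      = ENNReal.ofReal (∫ α in cube, ‖g α‖ ^ 12) := by
    rw [MeasureTheory.ofReal_integral_eq_lintegral_ofReal hIg
      (Filter.Eventually.of_forall fun α => by positivity)]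
    refine MeasureTheory.lintegral_congr fun α => ?_
    rw [hGpow α, ← enorm_eq_nnnorm, ← ofReal_norm, ← ENNReal.ofReal_pow (norm_nonneg _)]
  have hlhs : (∫ α in cube, ‖f α‖ ^ (2 * u) * ‖g α‖ ^ (2 * v))
      = (∫⁻ α in cube, (F * G) α).toReal := by
    rw [MeasureTheory.integral_eq_lintegral_of_nonneg_ae
      (f := fun α => ‖f α‖ ^ (2 * u) * ‖g α‖ ^ (2 * v)) (Filter.Eventually.of_forall fun α => by positivity)
      (((hf.norm.pow (2*u)).mul (hg.norm.pow (2*v))).aestronglyMeasurable)]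
    congr 1
    refine MeasureTheory.lintegral_congr fun α => ?_
    show _ = (‖f α‖₊ : ℝ≥0∞) ^ (2 * u) * (‖g α‖₊ : ℝ≥0∞) ^ (2 * v)
    rw [ENNReal.ofReal_mul (by positivity),
      ← enorm_eq_nnnorm, ← ofReal_norm, ← enorm_eq_nnnorm, ← ofReal_norm,
      ← ENNReal.ofReal_pow (norm_nonneg _), ← ENNReal.ofReal_pow (norm_nonneg _)]
  rw [hlhs]
  have hexpu : 1 / ((6:ℝ) / u) = (u:ℝ) / 6 := by rw [one_div_div]
  have hexpv : 1 / ((6:ℝ) / v) = (v:ℝ) / 6 := by rw [one_div_div]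
  rw [hA, hB, hexpu, hexpv] at key
  have hne : ENNReal.ofReal (∫ α in cube, ‖f α‖ ^ 12) ^ ((u:ℝ) / 6)
      * ENNReal.ofReal (∫ α in cube, ‖g α‖ ^ 12) ^ ((v:ℝ) / 6) ≠ ⊤ :=
    ENNReal.mul_ne_top
      (ENNReal.rpow_ne_top_of_nonneg (by positivity) ENNReal.ofReal_ne_top)
      (ENNReal.rpow_ne_top_of_nonneg (by positivity) ENNReal.ofReal_ne_top)
  refine le_trans (ENNReal.toReal_mono hne key) ?_
  rw [ENNReal.toReal_mul, ← ENNReal.toReal_rpow, ← ENNReal.toReal_rpow,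
    ENNReal.toReal_ofReal (MeasureTheory.integral_nonneg fun α => by positivity),
    ENNReal.toReal_ofReal (MeasureTheory.integral_nonneg fun α => by positivity)]


lemma J_eq (Y : ℝ) : J 6 3 Y = (solSet (Finset.Icc 1 ⌊Y⌋)).card := by
  rw [J]
  have hset : {xy : (Fin 6 → ℤ) × (Fin 6 → ℤ) |
      (∀ i, 1 ≤ xy.1 i ∧ (xy.1 i : ℝ) ≤ Y) ∧
      (∀ i, 1 ≤ xy.2 i ∧ (xy.2 i : ℝ) ≤ Y) ∧
      (∀ j : ℕ, 1 ≤ j → j ≤ 3 → ∑ i, xy.1 i ^ j = ∑ i, xy.2 i ^ j)}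
      = ↑(solSet (Finset.Icc 1 ⌊Y⌋)) := by
    ext xy
    rw [Set.mem_setOf_eq, Finset.mem_coe, mem_solSet]
    simp only [Finset.mem_Icc, and_imp, Int.le_floor]
  rw [hset, Set.ncard_coe_finset]

end

/-- Lemma 2.1: there is an absolute constant `C > 0` such that for `X, M ≥ 2`, a prime
`M < p ≤ 2M`, nonnegative integers `c, d` with `M^c ≤ X` and `M^d ≤ X`, positive
integers `u, v` with `u + v = 6`, and integers `ξ, ζ`, one has
`∫_{[0,1)³} |𝔣_c(α;ξ)^{2u} 𝔣_d(α;ζ)^{2v}| dα ≤ C (J_{6,3}(X/M^c))^{u/6} (J_{6,3}(X/M^d))^{v/6}`. -/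
theorem mixed_moment_bound :
    ∃ C : ℝ, 0 < C ∧ ∀ (X M : ℝ) (p c d u v : ℕ) (ξ ζ : ℤ),
      2 ≤ X → 2 ≤ M → p.Prime → M < (p : ℝ) → (p : ℝ) ≤ 2 * M →
      M ^ c ≤ X → M ^ d ≤ X → 0 < u → 0 < v → u + v = 6 →
      (∫ α in cube, ‖fgen X p c ξ α‖ ^ (2 * u) * ‖fgen X p d ζ α‖ ^ (2 * v)) ≤
        C * (J 6 3 (X / M ^ c) : ℝ) ^ ((u : ℝ) / 6) *
          (J 6 3 (X / M ^ d) : ℝ) ^ ((v : ℝ) / 6) := by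
  refine ⟨4 ^ 12, by norm_num, ?_⟩
  intro X M p c d u v ξ ζ hX hM hp hMp hp2M hMc hMd hu hv huv
  have hM0 : (0:ℝ) < M := by linarith
  have hfg : ∀ (e : ℕ) (η : ℤ), fgen X p e η
      = expSum ((Finset.Icc 1 ⌊X⌋).filter (fun x => x ≡ η [ZMOD (p:ℤ) ^ e])) := by
    intro e η
    funext α
    rw [fgen, expSum, Finset.sum_filter]
  have main12 : ∀ (e : ℕ) (η : ℤ), M ^ e ≤ X →
      (∫ α in cube, ‖fgen X p e η α‖ ^ 12) ≤ 4 ^ 12 * (J 6 3 (X / M ^ e) : ℝ) := by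
    intro e η hMe
    set Y : ℝ := X / M ^ e with hYdef
    have hMe0 : (0:ℝ) < M ^ e := by positivity
    have hY1 : 1 ≤ Y := (one_le_div hMe0).mpr hMe
    set q : ℤ := (p:ℤ) ^ e with hqdef
    have hq : 0 < q := pow_pos (by exact_mod_cast hp.pos) e
    rw [hfg e η, moment]
    set r : ℤ := η % q with hrdef
    set t1 : ℤ := -((r - 1)/q) with ht1def
    set t2 : ℤ := (⌊X⌋ - r)/q with ht2def
    have h1 : (solSet ((Finset.Icc 1 ⌊X⌋).filter (fun x => x ≡ η [ZMOD q]))).card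
        = (solSet (Finset.Icc t1 t2)).card := by
      rw [filter_eq ⌊X⌋ q η hq, ← solSet_affine r q hq.ne']
    have h2 : (solSet (Finset.Icc t1 t2)).card
        = (solSet (Finset.Icc 1 (t2 - t1 + 1))).card := by
      rw [← Icc_translate t1 t2, ← solSet_affine (t1 - 1) 1 one_ne_zero]
    have hq_ge : (M:ℝ) ^ e ≤ (q:ℝ) := by
      have hqR : ((q:ℤ):ℝ) = (p:ℝ) ^ e := by rw [hqdef]; push_cast; ring
      rw [hqR]
      exact pow_le_pow_left₀ hM0.le hMp.le e
    have hNle : ((⌊X⌋:ℤ):ℝ) ≤ (q:ℝ) * Y := by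
      have h3 : (⌊X⌋:ℝ) ≤ X := Int.floor_le X
      have h4 : X = M ^ e * Y := by rw [hYdef]; field_simp
      nlinarith
    have h5 : t2 - t1 + 1 ≤ 4 * ⌊Y⌋ := prog_bound ⌊X⌋ q η hq Y hY1 hNle
    have h6 := split_bound ⌊Y⌋ (t2 - t1 + 1)
      (by rw [Int.le_floor]; exact_mod_cast hY1) h5
    rw [J_eq]
    calc ((solSet ((Finset.Icc 1 ⌊X⌋).filter (fun x => x ≡ η [ZMOD q]))).card : ℝ)
        = ((solSet (Finset.Icc 1 (t2 - t1 + 1))).card : ℝ) := by rw [h1, h2]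
      _ ≤ 4 ^ 12 * ((solSet (Finset.Icc 1 ⌊Y⌋)).card : ℝ) := h6
  have hcont : ∀ (e : ℕ) (η : ℤ), Continuous (fgen X p e η) := by
    intro e η
    rw [hfg e η]
    exact continuous_expSum _
  have hbd : ∀ (e : ℕ) (η : ℤ) (α : Fin 3 → ℝ), ‖fgen X p e η α‖
      ≤ (((Finset.Icc 1 ⌊X⌋).filter (fun x => x ≡ η [ZMOD (p:ℤ) ^ e])).card : ℝ) := by
    intro e η α
    rw [hfg e η]
    exact norm_expSum_le _ α
  refine le_trans (holder_cube (fgen X p c ξ) (fgen X p d ζ) (hcont c ξ) (hcont d ζ)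
    _ _ (hbd c ξ) (hbd d ζ) u v hu hv huv) ?_
  have hA0 : 0 ≤ ∫ α in cube, ‖fgen X p c ξ α‖ ^ 12 :=
    MeasureTheory.integral_nonneg fun α => by positivity
  have hB0 : 0 ≤ ∫ α in cube, ‖fgen X p d ζ α‖ ^ 12 :=
    MeasureTheory.integral_nonneg fun α => by positivity
  have hJ1 : (0:ℝ) ≤ (J 6 3 (X / M ^ c) : ℝ) := Nat.cast_nonneg _
  have hJ2 : (0:ℝ) ≤ (J 6 3 (X / M ^ d) : ℝ) := Nat.cast_nonneg _
  have step1 : (∫ α in cube, ‖fgen X p c ξ α‖ ^ 12) ^ ((u:ℝ)/6)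
      ≤ ((4:ℝ) ^ 12) ^ ((u:ℝ)/6) * (J 6 3 (X / M ^ c) : ℝ) ^ ((u:ℝ)/6) := by
    rw [← Real.mul_rpow (by norm_num) hJ1]
    exact Real.rpow_le_rpow hA0 (main12 c ξ hMc) (by positivity)
  have step2 : (∫ α in cube, ‖fgen X p d ζ α‖ ^ 12) ^ ((v:ℝ)/6)
      ≤ ((4:ℝ) ^ 12) ^ ((v:ℝ)/6) * (J 6 3 (X / M ^ d) : ℝ) ^ ((v:ℝ)/6) := by
    rw [← Real.mul_rpow (by norm_num) hJ2]
    exact Real.rpow_le_rpow hB0 (main12 d ζ hMd) (by positivity)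
  have hfinal := mul_le_mul step1 step2 (Real.rpow_nonneg hB0 _) (by positivity)
  refine le_trans hfinal (le_of_eq ?_)
  have hpow : ((4:ℝ) ^ 12) ^ ((u:ℝ)/6) * ((4:ℝ) ^ 12) ^ ((v:ℝ)/6) = 4 ^ 12 := by
    rw [← Real.rpow_add (by norm_num : (0:ℝ) < 4 ^ 12)]
    have he : (u:ℝ)/6 + (v:ℝ)/6 = 1 := by
      have : (u:ℝ) + (v:ℝ) = 6 := by exact_mod_cast huv
      field_simp
      linarith
    rw [he, Real.rpow_one]
  rw [mul_mul_mul_comm, hpow]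
  ring
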